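/- Let G be a unicyclic graph (a connected graph with exactly one cycle) and ℓ ≥ 3. Then the ℓ-leaky forcing number of G equals the number of vertices of G with degree at most ℓ. -/

import Mathlib

open SimpleGraph

namespace LF

variable {V : Type*}

/-- Vertices eventually forced blue, starting from `S`, with leak set `L`:
a blue vertex not in `L` whose every neighbor other than `w` is blue forces `w`. -/
inductive Forced (G : SimpleGraph V) (L S : Set V) : V → Prop
  | init (v : V) (hv : v ∈ S) : Forced G L S v
  | force (b w : V) (hb : Forced G L S b) (hbL : b ∉ L) (hadj : G.Adj b w)
      (hall : ∀ u, G.Adj b u → u ≠ w → Forced G L S u) : Forced G L S w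

/-- `S` is an ℓ-leaky forcing set of `G`. -/
def IsLeakyForcingSet (G : SimpleGraph V) (ℓ : ℕ) (S : Set V) : Prop :=
  ∀ L : Set V, L.ncard ≤ ℓ → ∀ v, Forced G L S v

/-- The ℓ-leaky forcing number `Z_{(ℓ)}(G)`. -/
noncomputable def leakyForcingNumber (G : SimpleGraph V) [Fintype V] (ℓ : ℕ) : ℕ :=
  sInf {k | ∃ S : Finset V, S.card = k ∧ IsLeakyForcingSet G ℓ ↑S}

/-- An ℓ-leaky fort: a nonempty set `F` such that at most ℓ vertices outside `F`
have exactly one neighbor in `F`. -/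
def IsLeakyFort (G : SimpleGraph V) (ℓ : ℕ) (F : Set V) : Prop :=
  F.Nonempty ∧ {v | v ∉ F ∧ ∃! u, u ∈ F ∧ G.Adj v u}.ncard ≤ ℓ

/-- The path graph on `n` vertices. -/
def pathGraph (n : ℕ) : SimpleGraph (Fin n) :=
  SimpleGraph.fromRel (fun i j => i.val + 1 = j.val)

/-- The cycle graph on `n` vertices. -/
def cycleGraph (n : ℕ) : SimpleGraph (Fin n) :=
  SimpleGraph.fromRel (fun i j => (i.val + 1) % n = j.val)

/-- The star graph on `n` vertices, with center `0`. -/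
def starGraph (n : ℕ) : SimpleGraph (Fin n) :=
  SimpleGraph.fromRel (fun i _ => i.val = 0)

/-- The generalized Petersen graph `P(n,k)`: `Sum.inl i` is the inner vertex `x_{i+1}`,
`Sum.inr i` is the outer vertex `y_{i+1}` (0-indexed). -/
def petersen (n k : ℕ) : SimpleGraph (Fin n ⊕ Fin n) :=
  SimpleGraph.fromRel (fun a b =>
    match a, b with
    | Sum.inr i, Sum.inr j => (i.val + 1) % n = j.val
    | Sum.inl i, Sum.inr j => i = j
    | Sum.inl i, Sum.inl j => (i.val + k) % n = j.val
    | _, _ => False)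

end LF

set_option linter.unusedSectionVars false

namespace StmtAux
open Finset
variable {V : Type*} [Fintype V] [DecidableEq V] (G : SimpleGraph V) [DecidableRel G.Adj]

lemma walk_cross {B : Finset V} : ∀ {x y : V}, G.Walk x y → x ∈ B → y ∉ B →
    ∃ b ∈ B, ∃ v, v ∉ B ∧ G.Adj b v := by
  intro x y w
  induction w with
  | nil => intro hx hy; exact absurd hx hy
  | @cons x z y h p ih =>
    intro hx hy
    by_cases hz : z ∈ B
    · exact ih hz hy
    · exact ⟨x, hx, z, hz, h⟩

lemma exists_cross (hconn : G.Connected) {B : Finset V} (hne : B.Nonempty)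
    (hBu : B ≠ Finset.univ) : ∃ b ∈ B, ∃ v, v ∉ B ∧ G.Adj b v := by
  obtain ⟨b₀, hb₀⟩ := hne
  have : ∃ v₀, v₀ ∉ B := by
    by_contra h
    push_neg at h
    exact hBu (Finset.eq_univ_iff_forall.2 h)
  obtain ⟨v₀, hv₀⟩ := this
  obtain ⟨w⟩ := hconn.preconnected b₀ v₀
  exact walk_cross G w hb₀ hv₀

lemma boundary (hconn : G.Connected) :
    ∀ (B : Finset V), B ≠ Finset.univ →
      B.card ≤ (G.edgeFinset.filter (fun e => ∃ x ∈ e, x ∈ B)).card := by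
  intro B
  induction B using Finset.strongInduction with
  | _ B ih =>
  intro hBu
  rcases B.eq_empty_or_nonempty with rfl | hne
  · simp
  obtain ⟨b, hb, v, hv, hadj⟩ := exists_cross G hconn hne hBu
  have hB' : B.erase b ⊂ B := Finset.erase_ssubset hb
  have hB'u : B.erase b ≠ Finset.univ := by
    intro h
    exact (Finset.notMem_erase b B) (h ▸ Finset.mem_univ b)
  have hIH := ih _ hB' hB'u
  have hsub : insert s(b, v) (G.edgeFinset.filter (fun e => ∃ x ∈ e, x ∈ B.erase b))
      ⊆ G.edgeFinset.filter (fun e => ∃ x ∈ e, x ∈ B) := by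
    intro e he
    rcases Finset.mem_insert.1 he with rfl | he
    · exact Finset.mem_filter.2 ⟨mem_edgeFinset.2 hadj, b, Sym2.mem_mk_left _ _, hb⟩
    · obtain ⟨h1, x, hx, hx2⟩ := Finset.mem_filter.1 he
      exact Finset.mem_filter.2 ⟨h1, x, hx, Finset.mem_of_mem_erase hx2⟩
  have hnm : s(b, v) ∉ G.edgeFinset.filter (fun e => ∃ x ∈ e, x ∈ B.erase b) := by
    intro h
    obtain ⟨-, x, hx, hx2⟩ := Finset.mem_filter.1 h
    rcases Sym2.mem_iff.1 hx with rfl | rfl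
    · exact Finset.notMem_erase x B hx2
    · exact hv (Finset.mem_of_mem_erase hx2)
  have h2 := Finset.card_le_card hsub
  rw [Finset.card_insert_of_notMem hnm] at h2
  have hc : B.card = (B.erase b).card + 1 := (Finset.card_erase_add_one hb).symm
  calc B.card = (B.erase b).card + 1 := hc
    _ ≤ _ + 1 := Nat.add_le_add_right hIH 1
    _ ≤ _ := h2

lemma sum_deg_within (hconn : G.Connected) (huni : G.edgeFinset.card = Fintype.card V)
    (A : Finset V) (hA : A.Nonempty) :
    ∑ v ∈ A, (A.filter (G.Adj v)).card ≤ 2 * A.card := by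
  set GA : SimpleGraph V :=
    { Adj := fun x y => G.Adj x y ∧ x ∈ A ∧ y ∈ A
      symm := ⟨fun x y ⟨h1, h2, h3⟩ => ⟨h1.symm, h3, h2⟩⟩
      loopless := ⟨fun x ⟨h1, _⟩ => G.loopless.irrefl x h1⟩ } with hGA
  haveI : DecidableRel GA.Adj := fun x y => inferInstanceAs (Decidable (_ ∧ _ ∧ _))
  have hdeg : ∀ v ∈ A, GA.degree v = (A.filter (G.Adj v)).card := by
    intro v hv
    rw [← card_neighborFinset_eq_degree]
    congr 1
    ext y
    simp only [mem_neighborFinset, hGA, Finset.mem_filter]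
    tauto
  have hsum : ∑ v ∈ A, (A.filter (G.Adj v)).card ≤ ∑ v, GA.degree v := by
    rw [← Finset.sum_congr rfl hdeg]
    exact Finset.sum_le_sum_of_subset (Finset.subset_univ A)
  have hhs : ∑ v, GA.degree v = 2 * GA.edgeFinset.card :=
    GA.sum_degrees_eq_twice_card_edges
  -- edge bound
  have hBu : Aᶜ ≠ Finset.univ := by
    obtain ⟨a, ha⟩ := hA
    intro h
    have : a ∈ (Aᶜ : Finset V) := h ▸ Finset.mem_univ a
    exact (Finset.mem_compl.1 this) ha
  have hb := boundary G hconn Aᶜ hBu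
  have hsub : GA.edgeFinset ⊆
      G.edgeFinset.filter (fun e => ¬ ∃ x ∈ e, x ∈ (Aᶜ : Finset V)) := by
    intro e he
    induction e with
    | h x y =>
      rw [mem_edgeFinset, hGA] at he
      obtain ⟨h1, h2, h3⟩ := he
      refine Finset.mem_filter.2 ⟨mem_edgeFinset.2 h1, ?_⟩
      rintro ⟨z, hz, hz2⟩
      rcases Sym2.mem_iff.1 hz with rfl | rfl
      · exact Finset.mem_compl.1 hz2 h2
      · exact Finset.mem_compl.1 hz2 h3
  have hpart := Finset.card_filter_add_card_filter_not
    (s := G.edgeFinset) (p := fun e => ∃ x ∈ e, x ∈ (Aᶜ : Finset V))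
  have hcompl : (Aᶜ : Finset V).card + A.card = Fintype.card V := by
    rw [Finset.card_compl]
    have := Finset.card_le_univ A
    omega
  have h1 := Finset.card_le_card hsub
  have hfin : GA.edgeFinset.card ≤ A.card := by omega
  omega

lemma double_count (X Y : Finset V) :
    ∑ x ∈ X, (Y.filter (G.Adj x)).card = ∑ y ∈ Y, (X.filter (G.Adj y)).card := by
  simp only [Finset.card_filter]
  rw [Finset.sum_comm]
  refine Finset.sum_congr rfl fun y _ => Finset.sum_congr rfl fun x _ => ?_
  simp [G.adj_comm]

lemma sum_dU_eq (U : Finset V) :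
    ∑ v, (U.filter (G.Adj v)).card = ∑ u ∈ U, G.degree u := by
  rw [double_count G Finset.univ U]
  refine Finset.sum_congr rfl fun u _ => ?_
  rw [← neighborFinset_eq_filter]
  rfl

lemma counting (hconn : G.Connected) (huni : G.edgeFinset.card = Fintype.card V)
    {ℓ : ℕ} (hℓ : 3 ≤ ℓ) (U : Finset V) (hne : U.Nonempty)
    (hdeg : ∀ u ∈ U, ℓ + 1 ≤ G.degree u) :
    ℓ + 1 ≤ (Finset.univ.filter
      (fun v => v ∉ U ∧ (U.filter (G.Adj v)).card = 1)).card := by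
  set B1 := Finset.univ.filter (fun v => v ∉ U ∧ (U.filter (G.Adj v)).card = 1) with hB1
  set M := Finset.univ.filter (fun v => v ∉ U ∧ 2 ≤ (U.filter (G.Adj v)).card) with hM
  set Z := Finset.univ.filter (fun v => v ∉ U ∧ (U.filter (G.Adj v)).card = 0) with hZ
  -- partition of univ
  have hdisjUB1 : Disjoint U B1 := by
    rw [Finset.disjoint_left]; intro a ha ha2
    exact ((Finset.mem_filter.1 ha2).2.1) ha
  have hdisjUM : Disjoint U M := by
    rw [Finset.disjoint_left]; intro a ha ha2
    exact ((Finset.mem_filter.1 ha2).2.1) ha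
  have hdisjUZ : Disjoint U Z := by
    rw [Finset.disjoint_left]; intro a ha ha2
    exact ((Finset.mem_filter.1 ha2).2.1) ha
  have hdisjB1M : Disjoint B1 M := by
    rw [Finset.disjoint_left]; intro a ha ha2
    have := (Finset.mem_filter.1 ha).2.2
    have := (Finset.mem_filter.1 ha2).2.2
    omega
  have hdisjB1Z : Disjoint B1 Z := by
    rw [Finset.disjoint_left]; intro a ha ha2
    have := (Finset.mem_filter.1 ha).2.2
    have := (Finset.mem_filter.1 ha2).2.2
    omega
  have hdisjMZ : Disjoint M Z := by
    rw [Finset.disjoint_left]; intro a ha ha2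
    have := (Finset.mem_filter.1 ha).2.2
    have := (Finset.mem_filter.1 ha2).2.2
    omega
  have hpart : Finset.univ = U ∪ (B1 ∪ (M ∪ Z)) := by
    ext v
    simp only [Finset.mem_univ, true_iff, Finset.mem_union, hB1, hM, hZ,
      Finset.mem_filter, Finset.mem_univ, true_and]
    by_cases hv : v ∈ U
    · exact Or.inl hv
    · right
      rcases Nat.lt_or_ge ((U.filter (G.Adj v)).card) 1 with h | h
      · exact Or.inr (Or.inr ⟨hv, by omega⟩)
      · rcases Nat.lt_or_ge ((U.filter (G.Adj v)).card) 2 with h2 | h2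
        · exact Or.inl ⟨hv, by omega⟩
        · exact Or.inr (Or.inl ⟨hv, h2⟩)
  -- E1
  have hE1 : (∑ u ∈ U, (U.filter (G.Adj u)).card) + B1.card + (∑ v ∈ M, (U.filter (G.Adj v)).card) = ∑ u ∈ U, G.degree u := by
    have := sum_dU_eq G U
    rw [hpart, Finset.sum_union (by
        refine Finset.disjoint_union_right.2 ⟨hdisjUB1, ?_⟩
        exact Finset.disjoint_union_right.2 ⟨hdisjUM, hdisjUZ⟩),
      Finset.sum_union (Finset.disjoint_union_right.2 ⟨hdisjB1M, hdisjB1Z⟩),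
      Finset.sum_union hdisjMZ] at this
    have hB1sum : ∑ v ∈ B1, (U.filter (G.Adj v)).card = B1.card := by
      rw [Finset.card_eq_sum_ones]
      refine Finset.sum_congr rfl fun v hv => (Finset.mem_filter.1 hv).2.2
    have hZsum : ∑ v ∈ Z, (U.filter (G.Adj v)).card = 0 := by
      refine Finset.sum_eq_zero fun v hv => (Finset.mem_filter.1 hv).2.2
    omega
  -- E2
  have hE2 : (∑ u ∈ U, (U.filter (G.Adj u)).card) + 2 * (∑ v ∈ M, (U.filter (G.Adj v)).card) ≤ 2 * (U.card + M.card) := by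
    have hA := sum_deg_within G hconn huni (U ∪ M)
      (hne.mono Finset.subset_union_left)
    rw [Finset.card_union_of_disjoint hdisjUM] at hA
    rw [Finset.sum_union hdisjUM] at hA
    have hsplit : ∀ v, ((U ∪ M).filter (G.Adj v)).card
        = (U.filter (G.Adj v)).card + (M.filter (G.Adj v)).card := by
      intro v
      rw [Finset.filter_union, Finset.card_union_of_disjoint
        (Finset.disjoint_filter_filter hdisjUM)]
    simp only [hsplit] at hA
    rw [Finset.sum_add_distrib, Finset.sum_add_distrib] at hA
    have hdc : ∑ u ∈ U, (M.filter (G.Adj u)).card = ∑ v ∈ M, (U.filter (G.Adj v)).card :=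
      double_count G U M
    have hMle : ∑ v ∈ M, (U.filter (G.Adj v)).card ≤ ∑ v ∈ M, (U.filter (G.Adj v)).card + ∑ v ∈ M, (M.filter (G.Adj v)).card :=
      Nat.le_add_right _ _
    omega
  -- E3
  have hE3 : 2 * M.card ≤ ∑ v ∈ M, (U.filter (G.Adj v)).card := by
    rw [Finset.card_eq_sum_ones, Finset.mul_sum]
    refine Finset.sum_le_sum fun v hv => ?_
    have := (Finset.mem_filter.1 hv).2.2
    omega
  rcases Nat.lt_or_ge U.card 2 with hc | hc
  · -- U is a singleton
    have hc1 : U.card = 1 := by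
      have := Finset.card_pos.2 hne
      omega
    obtain ⟨u, rfl⟩ := Finset.card_eq_one.1 hc1
    have hp : (({u} : Finset V).filter (G.Adj u)).card = 0 := by
      simp only [Finset.filter_singleton]
      by_cases h : G.Adj u u
      · exact absurd h (G.loopless.irrefl u)
      · simp [h]
    have hM0 : M = ∅ := by
      rw [Finset.eq_empty_iff_forall_notMem]
      intro v hv
      have h2 := (Finset.mem_filter.1 hv).2.2
      have : (({u} : Finset V).filter (G.Adj v)).card ≤ 1 := by
        simpa using Finset.card_filter_le {u} (G.Adj v)
      omega
    have hsum : ∑ u' ∈ ({u} : Finset V), (({u} : Finset V).filter (G.Adj u')).card = 0 := by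
      simp [hp]
    have hsum2 : ∑ v ∈ M, (({u} : Finset V).filter (G.Adj v)).card = 0 := by simp [hM0]
    have hd : ℓ + 1 ≤ ∑ u' ∈ ({u} : Finset V), G.degree u' := by
      simpa using hdeg u (Finset.mem_singleton_self u)
    omega
  · -- |U| ≥ 2
    have hE4 : (ℓ + 1) * U.card ≤ ∑ u ∈ U, G.degree u := by
      calc (ℓ + 1) * U.card = ∑ _u ∈ U, (ℓ + 1) := by
            rw [Finset.sum_const, smul_eq_mul, mul_comm]
        _ ≤ ∑ u ∈ U, G.degree u := Finset.sum_le_sum hdeg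
    have key : (ℓ + 1) * U.card ≤ B1.card + 2 * U.card := by omega
    have h2 : (ℓ + 1) * 2 ≤ (ℓ + 1) * U.card := Nat.mul_le_mul_left _ hc
    have h3 : 2 * U.card ≤ ℓ * U.card := Nat.mul_le_mul_right _ (by omega)
    nlinarith [key, h2, h3]

lemma fort_to_forcing (hconn : G.Connected) (huni : G.edgeFinset.card = Fintype.card V)
    {ℓ : ℕ} (hℓ : 3 ≤ ℓ) (S : Set V)
    (hS : ∀ v, G.degree v ≤ ℓ → v ∈ S) :
    LF.IsLeakyForcingSet G ℓ S := by
  classical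
  intro L hL v
  by_contra hv
  set U := Finset.univ.filter (fun v => ¬ LF.Forced G L S v) with hU
  have hvU : v ∈ U := Finset.mem_filter.2 ⟨Finset.mem_univ v, hv⟩
  have hne : U.Nonempty := ⟨v, hvU⟩
  have hUS : ∀ u ∈ U, ℓ + 1 ≤ G.degree u := by
    intro u hu
    by_contra h
    exact (Finset.mem_filter.1 hu).2 (LF.Forced.init u (hS u (by omega)))
  have hcount := counting G hconn huni hℓ U hne hUS
  set B1 := Finset.univ.filter
    (fun v => v ∉ U ∧ (U.filter (G.Adj v)).card = 1) with hB1
  have hsub : (↑B1 : Set V) ⊆ L := by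
    intro w hw
    obtain ⟨-, hwU, hw1⟩ := Finset.mem_filter.1 (Finset.mem_coe.1 hw)
    have hwF : LF.Forced G L S w := by
      by_contra h
      exact hwU (Finset.mem_filter.2 ⟨Finset.mem_univ w, h⟩)
    obtain ⟨u, hu⟩ := Finset.card_eq_one.1 hw1
    have humem : u ∈ U.filter (G.Adj w) := hu ▸ Finset.mem_singleton_self u
    obtain ⟨huU, hadj⟩ := Finset.mem_filter.1 humem
    by_contra hwL
    have : LF.Forced G L S u := by
      refine LF.Forced.force w u hwF hwL hadj ?_
      intro x hx hxu
      by_contra hxF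
      have : x ∈ U.filter (G.Adj w) :=
        Finset.mem_filter.2 ⟨Finset.mem_filter.2 ⟨Finset.mem_univ x, hxF⟩, hx⟩
      rw [hu, Finset.mem_singleton] at this
      exact hxu this
    exact (Finset.mem_filter.1 huU).2 this
  have : B1.card ≤ L.ncard := by
    rw [← Set.ncard_coe_finset]
    exact Set.ncard_le_ncard hsub (Set.toFinite L)
  omega

end StmtAux

theorem stmt8 {V : Type*} [Fintype V] [DecidableEq V] (G : SimpleGraph V) [DecidableRel G.Adj]
    (hconn : G.Connected) (huni : G.edgeFinset.card = Fintype.card V)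
    (ℓ : ℕ) (hℓ : 3 ≤ ℓ) :
    LF.leakyForcingNumber G ℓ =
      (Finset.univ.filter fun v => G.degree v ≤ ℓ).card := by
  classical
  set T := Finset.univ.filter (fun v => G.degree v ≤ ℓ) with hT
  have hforce : LF.IsLeakyForcingSet G ℓ ↑T :=
    StmtAux.fort_to_forcing G hconn huni hℓ ↑T
      (fun v hv => Finset.mem_coe.2 (Finset.mem_filter.2 ⟨Finset.mem_univ v, hv⟩))
  have hmem : T.card ∈ {k | ∃ S : Finset V, S.card = k ∧ LF.IsLeakyForcingSet G ℓ ↑S} :=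
    ⟨T, rfl, hforce⟩
  have hlow : ∀ k ∈ {k | ∃ S : Finset V, S.card = k ∧ LF.IsLeakyForcingSet G ℓ ↑S},
      T.card ≤ k := by
    rintro k ⟨S, rfl, hS⟩
    refine Finset.card_le_card ?_
    intro v hv
    have hdv : G.degree v ≤ ℓ := (Finset.mem_filter.1 hv).2
    have hncard : (↑(G.neighborFinset v) : Set V).ncard ≤ ℓ := by
      rw [Set.ncard_coe_finset, SimpleGraph.card_neighborFinset_eq_degree]
      exact hdv
    have hF := hS ↑(G.neighborFinset v) hncard v
    cases hF with
    | init _ h => exact h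
    | force b w hb hbL hadj hall =>
      exact absurd (Finset.mem_coe.2 ((G.mem_neighborFinset v b).2 hadj.symm)) hbL
  exact le_antisymm (Nat.sInf_le hmem) (hlow _ (Nat.sInf_mem (Set.nonempty_of_mem hmem)))
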